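/- Let j : z → so(v) be of Heisenberg type, dim z = r, and let Z₁,…,Z_ℓ be elements of an orthonormal basis of z with 1 ≤ ℓ < r. Then Tr(j_{Z₁} ∘ ⋯ ∘ j_{Z_ℓ}) = 0. -/

import Mathlib

open scoped RealInnerProductSpace

lemma anticomm_list_prod {R M : Type*} [CommRing R] [AddCommGroup M] [Module R M]
    (A : Module.End R M) (L : List (Module.End R M))
    (h : ∀ x ∈ L, A * x = -(x * A)) :
    A * L.prod = ((-1 : R) ^ L.length) • (L.prod * A) := by
  induction L with
  | nil => simp
  | cons x L ih =>
    have hx := h x List.mem_cons_self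
    have hih := ih (fun y hy => h y (List.mem_cons_of_mem x hy))
    simp only [List.prod_cons, List.length_cons]
    calc A * (x * L.prod) = (A * x) * L.prod := by rw [mul_assoc]
      _ = (-(x * A)) * L.prod := by rw [hx]
      _ = -(x * (A * L.prod)) := by rw [neg_mul, mul_assoc]
      _ = -(x * (((-1 : R) ^ L.length) • (L.prod * A))) := by rw [hih]
      _ = ((-1 : R) ^ (L.length + 1)) • (x * L.prod * A) := by
          rw [mul_smul_comm, ← mul_assoc, ← neg_smul, pow_succ, mul_neg_one]

/-- For `j : z → so(v)` of Heisenberg type with `dim z = r` and `Z₁,…,Z_ℓ` distinct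
elements of an orthonormal basis of `z` with `1 ≤ ℓ < r`,
`Tr(j_{Z₁} ∘ ⋯ ∘ j_{Z_ℓ}) = 0`. -/
theorem stmt5 {V Z : Type*}
    [NormedAddCommGroup V] [InnerProductSpace ℝ V] [FiniteDimensional ℝ V]
    [NormedAddCommGroup Z] [InnerProductSpace ℝ Z] [FiniteDimensional ℝ Z]
    (j : Z →ₗ[ℝ] Module.End ℝ V)
    (hskew : ∀ (z : Z) (x y : V), ⟪j z x, y⟫ = -⟪x, j z y⟫)
    (hheis : ∀ z : Z, j z * j z = -(‖z‖ ^ 2 : ℝ) • (1 : Module.End ℝ V))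
    (r ℓ : ℕ) (b : OrthonormalBasis (Fin r) ℝ Z)
    (f : Fin ℓ → Fin r) (hf : Function.Injective f)
    (h1 : 1 ≤ ℓ) (h2 : ℓ < r) :
    LinearMap.trace ℝ V (List.ofFn fun i => j (b (f i))).prod = 0 := by
  have hsq : ∀ i : Fin r, j (b i) * j (b i) = -1 := by
    intro i
    have := hheis (b i)
    rw [b.orthonormal.1 i] at this
    simpa using this
  have hanti : ∀ i k : Fin r, i ≠ k → j (b i) * j (b k) = -(j (b k) * j (b i)) := by
    intro i k hik
    have hadd := hheis (b i + b k)
    have hn : ‖b i + b k‖ ^ 2 = (2 : ℝ) := by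
      rw [norm_add_sq_real, b.orthonormal.2 hik, b.orthonormal.1 i, b.orthonormal.1 k]
      ring
    rw [map_add, hn] at hadd
    have hexp : (j (b i) + j (b k)) * (j (b i) + j (b k))
        = j (b i) * j (b i) + (j (b i) * j (b k) + j (b k) * j (b i))
          + j (b k) * j (b k) := by noncomm_ring
    rw [hexp, hsq i, hsq k] at hadd
    have h2s : (-(2:ℝ)) • (1 : Module.End ℝ V) = -1 + -1 := by
      rw [neg_smul, two_smul]; abel
    rw [h2s] at hadd
    have hz : j (b i) * j (b k) + j (b k) * j (b i) = 0 := by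
      calc j (b i) * j (b k) + j (b k) * j (b i)
          = (-1 + (j (b i) * j (b k) + j (b k) * j (b i)) + -1) + (1 + 1) := by abel
        _ = (-1 + -1) + (1 + 1) := by rw [hadd]
        _ = 0 := by abel
    exact eq_neg_of_add_eq_zero_left hz
  rcases Nat.even_or_odd ℓ with heven | hodd
  · -- even case: peel off the first factor and anticommute
    obtain ⟨n, rfl⟩ : ∃ n, ℓ = n + 1 := ⟨ℓ - 1, by omega⟩
    rw [List.ofFn_succ, List.prod_cons]
    have hAQ : ∀ x ∈ (List.ofFn fun i : Fin n => j (b (f i.succ))),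
        j (b (f 0)) * x = -(x * j (b (f 0))) := by
      intro x hx
      rw [List.mem_ofFn] at hx
      obtain ⟨i, rfl⟩ := hx
      exact hanti (f 0) (f i.succ) (fun h => (Fin.succ_ne_zero i) (hf h.symm))
    have hn : Odd n := by
      rcases heven with ⟨m, hm⟩
      exact ⟨m - 1, by omega⟩
    have hcomm := anticomm_list_prod (j (b (f 0))) _ hAQ
    rw [List.length_ofFn, hn.neg_one_pow, neg_one_smul] at hcomm
    have t1 := LinearMap.trace_mul_comm ℝ (j (b (f 0)))
      ((List.ofFn fun i : Fin n => j (b (f i.succ))).prod)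
    rw [hcomm, map_neg] at t1
    rw [hcomm, map_neg]
    linarith
  · -- odd case: use a basis vector not in the range of f
    obtain ⟨α, hα⟩ : ∃ α : Fin r, ∀ i, f i ≠ α := by
      by_contra h
      push_neg at h
      have hsurj : Function.Surjective f := h
      have := Fintype.card_le_of_surjective f hsurj
      simp only [Fintype.card_fin] at this
      omega
    set A := j (b α) with hA
    set L := (List.ofFn fun i => j (b (f i))) with hL
    have hAL : ∀ x ∈ L, A * x = -(x * A) := by
      intro x hx
      rw [hL, List.mem_ofFn] at hx
      obtain ⟨i, rfl⟩ := hx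
      exact hanti α (f i) (fun h => (hα i) h.symm)
    have hcomm := anticomm_list_prod A L hAL
    rw [hL, List.length_ofFn] at hcomm
    rw [hodd.neg_one_pow, neg_one_smul] at hcomm
    set P := L.prod with hP
    have e2 : A * P * A = P := by
      rw [hcomm, neg_mul, mul_assoc, hsq α]
      simp
    have e1 : LinearMap.trace ℝ V (A * P * A) = - LinearMap.trace ℝ V P := by
      rw [mul_assoc, LinearMap.trace_mul_comm, mul_assoc, hsq α]
      simp
    rw [e2] at e1
    linarith [e1]
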